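/- Let λ, ε > 0 with λ < ε², and let f(x) = Σᵢ [λ·log(1 + |xᵢ|/ε) + xᵢ²/2] on ℝⁿ. Then f is (1 - λ/ε²)-strongly convex on ℝⁿ. -/

import Mathlib

open scoped RealInnerProductSpace BigOperators

section Aux

variable {eps : ℝ}

private noncomputable def g0 (eps u : ℝ) : ℝ := Real.log (1 + u / eps) + u ^ 2 / (2 * eps ^ 2)

private lemma g0_hasDerivAt (heps : 0 < eps) {u : ℝ} (hu : 0 ≤ u) :
    HasDerivAt (g0 eps) (1 / (eps + u) + u / eps ^ 2) u := by
  have hpos : 0 < 1 + u / eps := by positivity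
  have h1 : HasDerivAt (fun u : ℝ => 1 + u / eps) (1 / eps) u := by
    simpa using ((hasDerivAt_id u).div_const eps).const_add 1
  have h2 : HasDerivAt (fun u : ℝ => Real.log (1 + u / eps)) (1 / eps / (1 + u / eps)) u :=
    h1.log hpos.ne'
  have h3 : HasDerivAt (fun u : ℝ => u ^ 2 / (2 * eps ^ 2)) (2 * u ^ 1 / (2 * eps ^ 2)) u :=
    (hasDerivAt_pow 2 u).div_const _
  have := h2.add h3
  refine this.congr_deriv ?_
  have h4 : eps + u ≠ 0 := by positivity
  field_simp

private lemma g0_convexOn (heps : 0 < eps) : ConvexOn ℝ (Set.Ici 0) (g0 eps) := by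
  have hint : interior (Set.Ici (0:ℝ)) = Set.Ioi 0 := interior_Ici
  have hderiv : ∀ u ∈ Set.Ioi (0:ℝ), deriv (g0 eps) u = 1 / (eps + u) + u / eps ^ 2 :=
    fun u hu => (g0_hasDerivAt heps (le_of_lt hu)).deriv
  apply MonotoneOn.convexOn_of_deriv (convex_Ici 0)
  · apply ContinuousOn.add
    · apply ContinuousOn.log
      · fun_prop
      · intro u hu
        have : (0:ℝ) ≤ u := hu
        positivity
    · fun_prop
  · rw [hint]
    intro u hu
    exact (g0_hasDerivAt heps (le_of_lt hu)).differentiableAt.differentiableWithinAt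
  · rw [hint]
    intro a ha b hb hab
    rw [hderiv a ha, hderiv b hb]
    have ha' : (0:ℝ) < a := ha
    have hb' : (0:ℝ) < b := hb
    have hA : 0 < eps + a := by linarith
    have hB : 0 < eps + b := by linarith
    have key : 1 / (eps + a) - 1 / (eps + b) = (b - a) / ((eps + a) * (eps + b)) := by
      field_simp
      ring
    have hD : eps ^ 2 ≤ (eps + a) * (eps + b) := by nlinarith
    have h2 : (b - a) / ((eps + a) * (eps + b)) ≤ (b - a) / eps ^ 2 :=
      div_le_div_of_nonneg_left (by linarith) (by positivity) hD |>.trans_eq rfl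
    have h3 : (b - a) / eps ^ 2 = b / eps ^ 2 - a / eps ^ 2 := by ring
    linarith [key ▸ h2]

private lemma g0_mono (heps : 0 < eps) : MonotoneOn (g0 eps) (Set.Ici 0) := by
  intro a ha b hb hab
  have ha' : (0:ℝ) ≤ a := ha
  have hb' : (0:ℝ) ≤ b := hb
  unfold g0
  have h1 : Real.log (1 + a / eps) ≤ Real.log (1 + b / eps) := by
    apply Real.log_le_log (by positivity)
    have : a / eps ≤ b / eps := by gcongr
    linarith
  have h2 : a ^ 2 / (2 * eps ^ 2) ≤ b ^ 2 / (2 * eps ^ 2) := by gcongr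
  linarith

/-- convexity combination for ψ(u) = log(1+|u|/ε) + u²/(2ε²) -/
private lemma psi_comb (heps : 0 < eps) (u v t : ℝ) (ht0 : 0 ≤ t) (ht1 : t ≤ 1) :
    g0 eps |(1 - t) * u + t * v| ≤ (1 - t) * g0 eps |u| + t * g0 eps |v| := by
  have habs : |(1 - t) * u + t * v| ≤ (1 - t) * |u| + t * |v| := by
    calc |(1 - t) * u + t * v| ≤ |(1 - t) * u| + |t * v| := abs_add_le _ _
      _ = (1 - t) * |u| + t * |v| := by
          rw [abs_mul, abs_mul, abs_of_nonneg (by linarith : (0:ℝ) ≤ 1 - t), abs_of_nonneg ht0]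
  have hmem : (1 - t) * |u| + t * |v| ∈ Set.Ici (0:ℝ) := by
    have := abs_nonneg u; have := abs_nonneg v
    have h1 : 0 ≤ (1 - t) * |u| := mul_nonneg (by linarith) (abs_nonneg u)
    have h2 : 0 ≤ t * |v| := mul_nonneg ht0 (abs_nonneg v)
    simpa using by linarith
  have step1 : g0 eps |(1 - t) * u + t * v| ≤ g0 eps ((1 - t) * |u| + t * |v|) :=
    g0_mono heps (Set.mem_Ici.2 (abs_nonneg _)) hmem habs
  have step2 := (g0_convexOn heps).2 (Set.mem_Ici.2 (abs_nonneg u)) (Set.mem_Ici.2 (abs_nonneg v))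
      (by linarith : (0:ℝ) ≤ 1 - t) ht0 (by ring : (1 - t) + t = 1)
  simp only [smul_eq_mul] at step2
  exact step1.trans step2

end Aux

/-- For λ, ε > 0 with λ < ε², the function
f(x) = Σᵢ [λ·log(1 + |xᵢ|/ε) + xᵢ²/2] is (1 - λ/ε²)-strongly convex on ℝⁿ. -/
theorem stmt_5 (n : ℕ) (lam eps : ℝ) (hlam : 0 < lam) (heps : 0 < eps)
    (hle : lam < eps ^ 2)
    (f : EuclideanSpace ℝ (Fin n) → ℝ)
    (hdef : ∀ x, f x = ∑ i, (lam * Real.log (1 + |x i| / eps) + (x i) ^ 2 / 2)) :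
    ∀ x y g : EuclideanSpace ℝ (Fin n),
      (∀ z, f z ≥ f x + ⟪g, z - x⟫) →
        f y ≥ f x + ⟪g, y - x⟫ + ((1 - lam / eps ^ 2) / 2) * ‖y - x‖ ^ 2 := by
  intro x y g hsub
  set μ : ℝ := 1 - lam / eps ^ 2 with hμdef
  have heps2 : (0:ℝ) < eps ^ 2 := by positivity
  have hμpos : 0 < μ := by
    rw [hμdef]
    have : lam / eps ^ 2 < 1 := (div_lt_one heps2).2 hle
    linarith
  set N : ℝ := ‖y - x‖ ^ 2 with hN
  -- norm squared as sum
  have hNsum : N = ∑ i, (y i - x i) ^ 2 := by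
    rw [hN, EuclideanSpace.norm_eq, Real.sq_sqrt (by positivity)]
    congr 1
    ext i
    simp [sq_abs]
  -- per-point decomposition: f z = ∑ (lam * g0 (|z i|) + μ * (z i)^2 / 2)
  have hdecomp : ∀ z : EuclideanSpace ℝ (Fin n),
      f z = ∑ i, (lam * g0 eps |z i| + μ * (z i) ^ 2 / 2) := by
    intro z
    rw [hdef z]
    apply Finset.sum_congr rfl
    intro i _
    unfold g0
    rw [hμdef]
    rw [sq_abs]
    field_simp
    ring
  -- combination inequality
  have hcomb : ∀ t : ℝ, t ∈ Set.Ioo (0:ℝ) 1 →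
      f (x + t • (y - x)) ≤ f x + t * (f y - f x) - μ / 2 * t * (1 - t) * N := by
    intro t ht
    obtain ⟨ht0, ht1⟩ := ht
    have hzi : ∀ i, (x + t • (y - x)) i = (1 - t) * x i + t * y i := by
      intro i
      simp [smul_eq_mul]
      ring
    have hterm : ∀ i : Fin n,
        lam * g0 eps |(x + t • (y - x)) i| + μ * ((x + t • (y - x)) i) ^ 2 / 2 ≤
          (1 - t) * (lam * g0 eps |x i| + μ * (x i) ^ 2 / 2)
            + t * (lam * g0 eps |y i| + μ * (y i) ^ 2 / 2)
            - μ / 2 * t * (1 - t) * (y i - x i) ^ 2 := by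
      intro i
      rw [hzi i]
      have h1 := psi_comb heps (x i) (y i) t (le_of_lt ht0) (le_of_lt ht1)
      have h2 : μ * ((1 - t) * x i + t * y i) ^ 2 / 2 =
          (1 - t) * (μ * (x i) ^ 2 / 2) + t * (μ * (y i) ^ 2 / 2)
            - μ / 2 * t * (1 - t) * (y i - x i) ^ 2 := by ring
      nlinarith [h1, hlam.le]
    calc f (x + t • (y - x))
        = ∑ i, (lam * g0 eps |(x + t • (y - x)) i| + μ * ((x + t • (y - x)) i) ^ 2 / 2) :=
          hdecomp _
      _ ≤ ∑ i, ((1 - t) * (lam * g0 eps |x i| + μ * (x i) ^ 2 / 2)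
            + t * (lam * g0 eps |y i| + μ * (y i) ^ 2 / 2)
            - μ / 2 * t * (1 - t) * (y i - x i) ^ 2) :=
          Finset.sum_le_sum fun i _ => hterm i
      _ = (1 - t) * f x + t * f y - μ / 2 * t * (1 - t) * N := by
          rw [hdecomp x, hdecomp y, hNsum, Finset.sum_sub_distrib, Finset.sum_add_distrib,
            ← Finset.mul_sum, ← Finset.mul_sum, ← Finset.mul_sum]
      _ = f x + t * (f y - f x) - μ / 2 * t * (1 - t) * N := by ring
  -- subgradient inequality at combination points
  have hineq : ∀ t : ℝ, t ∈ Set.Ioo (0:ℝ) 1 →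
      f x + ⟪g, y - x⟫ + μ / 2 * (1 - t) * N ≤ f y := by
    intro t ht
    have hsub' := hsub (x + t • (y - x))
    have hz : (x + t • (y - x)) - x = t • (y - x) := by abel
    rw [hz, real_inner_smul_right] at hsub'
    have hc := hcomb t ht
    have h2 : t * (⟪g, y - x⟫ + μ / 2 * (1 - t) * N) ≤ t * (f y - f x) := by nlinarith
    have h3 : ⟪g, y - x⟫ + μ / 2 * (1 - t) * N ≤ f y - f x :=
      le_of_mul_le_mul_left h2 ht.1
    linarith
  -- limit t → 0⁺
  have htend : Filter.Tendsto (fun t : ℝ => f x + ⟪g, y - x⟫ + μ / 2 * (1 - t) * N)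
      (nhdsWithin 0 (Set.Ioi 0)) (nhds (f x + ⟪g, y - x⟫ + μ / 2 * N)) := by
    have hcont : Continuous (fun t : ℝ => f x + ⟪g, y - x⟫ + μ / 2 * (1 - t) * N) := by
      fun_prop
    have h := (hcont.tendsto 0).mono_left (nhdsWithin_le_nhds (s := Set.Ioi 0))
    simpa using h
  have hev : ∀ᶠ t in nhdsWithin (0:ℝ) (Set.Ioi 0),
      f x + ⟪g, y - x⟫ + μ / 2 * (1 - t) * N ≤ f y := by
    filter_upwards [Ioo_mem_nhdsGT_of_mem (Set.mem_Ico.2 ⟨le_refl 0, one_pos⟩)] with t ht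
    exact hineq t ht
  have hfinal : f x + ⟪g, y - x⟫ + μ / 2 * N ≤ f y := le_of_tendsto htend hev
  have : ((1 - lam / eps ^ 2) / 2) * ‖y - x‖ ^ 2 = μ / 2 * N := by rw [hμdef, hN]
  linarith [this ▸ hfinal]
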